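/- The sandpile group G(d,h) of the d-regular tree of depth h is generated by the (d−1)^h elements {x̄ᵢ : i ∈ F(d,h)}, where F(d,h) is the set consisting of, for each vertex at odd depth (if h even, together with the root) respectively each vertex at even depth (if h odd), all but one of its children. Hence rank(G(d,h)) ≤ (d−1)^h. -/

import Mathlib

namespace SandpileTree

/-- Vertices of the rooted `d`-regular tree of depth `h`: a depth `n ≤ h` together with
the path of steps from the root, padded with value `0` beyond the depth.
The step out of the root has `d` choices; each later step has `d - 1` choices. -/
def Vert (d h : ℕ) : Type :=
  {p : Fin (h + 1) × (Fin h → Fin d) //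
    (∀ i : Fin h, (p.1 : ℕ) ≤ (i : ℕ) → (p.2 i : ℕ) = 0) ∧
    (∀ i : Fin h, 0 < (i : ℕ) → (i : ℕ) < (p.1 : ℕ) → (p.2 i : ℕ) < d - 1)}

instance (d h : ℕ) : DecidableEq (Vert d h) := by unfold Vert; infer_instance
instance (d h : ℕ) : Fintype (Vert d h) := by unfold Vert; infer_instance

/-- The depth (distance from the root) of a vertex. -/
def depth {d h : ℕ} (v : Vert d h) : ℕ := (v.1.1 : ℕ)

/-- The root of the tree. -/
def root (d h : ℕ) (hd : 0 < d) : Vert d h :=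
  ⟨(0, fun _ => ⟨0, hd⟩), by constructor <;> intro i <;> simp⟩

/-- `IsParent i j` means that `i` is the parent of `j` in the rooted tree. -/
def IsParent {d h : ℕ} (i j : Vert d h) : Prop :=
  depth j = depth i + 1 ∧ ∀ k : Fin h, (k : ℕ) < depth i → j.1.2 k = i.1.2 k

instance {d h : ℕ} (i j : Vert d h) : Decidable (IsParent i j) := by
  unfold IsParent; infer_instance

/-- The row of the reduced Laplacian of the augmented tree corresponding to vertex `i`:
`δ i = d·x_i − x_{parent i} − ∑_{j child of i} x_j` (no parent term for the root, and
no children terms for the leaves, which are attached to the sink by `d-1` edges). -/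
def delta (d h : ℕ) (i : Vert d h) : Vert d h → ℤ :=
  (d : ℤ) • Pi.single i 1
    - ∑ j ∈ Finset.univ.filter (fun j => IsParent j i), Pi.single j 1
    - ∑ j ∈ Finset.univ.filter (fun j => IsParent i j), Pi.single j 1

/-- The lattice `Λ ⊆ ℤ^V` spanned by the rows of the reduced Laplacian. -/
def lat (d h : ℕ) : AddSubgroup (Vert d h → ℤ) :=
  AddSubgroup.closure (Set.range (delta d h))

/-- The sandpile group `G(d,h) = ℤ^V / Λ` of the `d`-regular tree of depth `h`. -/
abbrev SG (d h : ℕ) : Type := (Vert d h → ℤ) ⧸ lat d h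

/-- The image `x̄ᵢ` of the standard basis vector `xᵢ` in the sandpile group. -/
def xbar (d h : ℕ) (i : Vert d h) : SG d h :=
  QuotientAddGroup.mk (Pi.single i 1)

/-- `θ(d,n) = ((d-1)^n - 1)/(d-2)`. -/
def theta (d n : ℕ) : ℕ := ((d - 1) ^ n - 1) / (d - 2)

end SandpileTree

open SandpileTree

namespace SandpileTree

/-- The last step on the path from the root to `j` (this is `0` exactly when `j` is the
distinguished child `m_{p(j)}` of its parent, or the root). -/
def lastStep {d h : ℕ} (j : Vert d h) : ℕ :=
  if hj : 0 < depth j then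
    (j.1.2 ⟨depth j - 1, by have := j.1.1.isLt; unfold depth at *; omega⟩ : ℕ)
  else 0

/-- The set `F(d,h)`: for each vertex `i` at odd depth if `h` is even (together with the
root), respectively at even depth if `h` is odd, take all children of `i` except the
distinguished child `mᵢ` (the child whose last step is `0`). Thus `F(d,h)` consists of
the root (when `h` is even) together with all non-distinguished vertices whose depth has
the same parity as `h`. -/
def Fset (d h : ℕ) : Finset (Vert d h) :=
  Finset.univ.filter (fun j => depth j % 2 = h % 2 ∧ (depth j = 0 ∨ lastStep j ≠ 0))

end SandpileTree

namespace SandpileTree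

variable {d h : ℕ}

lemma vert_ext {v w : Vert d h} (h1 : depth v = depth w)
    (h2 : ∀ k : Fin h, (v.1.2 k : ℕ) = (w.1.2 k : ℕ)) : v = w := by
  apply Subtype.ext
  apply Prod.ext
  · exact Fin.ext h1
  · funext k; exact Fin.ext (h2 k)

lemma depth_le (v : Vert d h) : depth v ≤ h := by
  have := v.1.1.isLt; unfold depth; omega

lemma d_pos (v : Vert d h) (hv : 0 < depth v) : 0 < d :=
  (v.1.2 ⟨0, lt_of_lt_of_le hv (depth_le v)⟩).pos

/-- The parent of a non-root vertex. -/
def parentOf (v : Vert d h) (hv : 0 < depth v) : Vert d h :=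
  ⟨(⟨depth v - 1, by have := v.1.1.isLt; unfold depth at *; omega⟩,
    fun i => if (i : ℕ) < depth v - 1 then v.1.2 i else ⟨0, d_pos v hv⟩),
   by
    constructor
    · intro i hi
      simp only [Fin.val_mk] at hi ⊢
      rw [if_neg (by omega)]
    · intro i hi1 hi2
      simp only [Fin.val_mk] at hi2 ⊢
      rw [if_pos (by omega)]
      exact v.2.2 i hi1 (by unfold depth at hi2; omega)⟩

lemma depth_parentOf (v : Vert d h) (hv : 0 < depth v) :
    depth (parentOf v hv) = depth v - 1 := rfl

lemma coord_parentOf (v : Vert d h) (hv : 0 < depth v) (k : Fin h) :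
    ((parentOf v hv).1.2 k : ℕ) = if (k : ℕ) < depth v - 1 then (v.1.2 k : ℕ) else 0 := by
  simp only [parentOf]
  split <;> simp

lemma isParent_parentOf (v : Vert d h) (hv : 0 < depth v) :
    IsParent (parentOf v hv) v := by
  constructor
  · rw [depth_parentOf]; omega
  · intro k hk
    rw [depth_parentOf] at hk
    apply Fin.ext
    rw [coord_parentOf, if_pos hk]

lemma isParent_unique {i j : Vert d h} (hij : IsParent i j) :
    ∃ hv : 0 < depth j, i = parentOf j hv := by
  obtain ⟨h1, h2⟩ := hij
  refine ⟨by omega, vert_ext (by rw [depth_parentOf]; omega) ?_⟩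
  intro k
  rw [coord_parentOf]
  by_cases hk : (k : ℕ) < depth j - 1
  · rw [if_pos hk, ← h2 k (by omega)]
  · rw [if_neg hk]
    exact i.2.1 k (by unfold depth at h1 hk; omega)

end SandpileTree
namespace SandpileTree

variable {d h : ℕ}

/-- The child of a vertex with last step `c`. -/
def childOf (v : Vert d h) (hv : depth v < h) (c : ℕ) (hc : c < d)
    (hc' : 0 < depth v → c < d - 1) : Vert d h :=
  ⟨(⟨depth v + 1, by unfold depth at hv ⊢; omega⟩,
    fun i => if (i : ℕ) = depth v then ⟨c, hc⟩ else v.1.2 i),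
   by
    constructor
    · intro i hi
      simp only [Fin.val_mk] at hi ⊢
      rw [if_neg (by omega)]
      exact v.2.1 i (by unfold depth at hi; omega)
    · intro i hi1 hi2
      simp only [Fin.val_mk] at hi2 ⊢
      by_cases hie : (i : ℕ) = depth v
      · rw [if_pos hie]
        exact hc' (hie ▸ hi1)
      · rw [if_neg hie]
        exact v.2.2 i hi1 (by unfold depth at hi2 hie; omega)⟩

lemma depth_childOf (v : Vert d h) (hv : depth v < h) (c : ℕ) (hc : c < d)
    (hc' : 0 < depth v → c < d - 1) : depth (childOf v hv c hc hc') = depth v + 1 := rfl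

lemma coord_childOf (v : Vert d h) (hv : depth v < h) (c : ℕ) (hc : c < d)
    (hc' : 0 < depth v → c < d - 1) (k : Fin h) :
    ((childOf v hv c hc hc').1.2 k : ℕ) = if (k : ℕ) = depth v then c else (v.1.2 k : ℕ) := by
  simp only [childOf]
  split <;> simp

lemma isParent_childOf (v : Vert d h) (hv : depth v < h) (c : ℕ) (hc : c < d)
    (hc' : 0 < depth v → c < d - 1) : IsParent v (childOf v hv c hc hc') := by
  constructor
  · rw [depth_childOf]
  · intro k hk
    apply Fin.ext
    rw [coord_childOf, if_neg (by omega)]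

lemma lastStep_eq (v : Vert d h) (hv : 0 < depth v) :
    lastStep v = (v.1.2 ⟨depth v - 1, by have := depth_le v; omega⟩ : ℕ) := by
  rw [lastStep, dif_pos hv]

lemma lastStep_childOf (v : Vert d h) (hv : depth v < h) (c : ℕ) (hc : c < d)
    (hc' : 0 < depth v → c < d - 1) : lastStep (childOf v hv c hc hc') = c := by
  rw [lastStep_eq _ (by rw [depth_childOf]; omega)]
  rw [coord_childOf, if_pos (by simp only [Fin.val_mk, depth_childOf]; omega)]

lemma child_eq_of_lastStep {u j v : Vert d h} (hj : IsParent u j) (hv : IsParent u v)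
    (hls : lastStep j = lastStep v) : j = v := by
  obtain ⟨hj1, hj2⟩ := hj
  obtain ⟨hv1, hv2⟩ := hv
  apply vert_ext (by omega)
  intro k
  rcases lt_trichotomy (k : ℕ) (depth u) with hk | hk | hk
  · rw [hj2 k hk, hv2 k hk]
  · have h1 : (⟨depth j - 1, by have := depth_le j; omega⟩ : Fin h) = k := Fin.ext (by simp only [Fin.val_mk]; omega)
    have h2 : (⟨depth v - 1, by have := depth_le v; omega⟩ : Fin h) = k := Fin.ext (by simp only [Fin.val_mk]; omega)
    have e1 := lastStep_eq j (by omega)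
    have e2 := lastStep_eq v (by omega)
    rw [h1] at e1
    rw [h2] at e2
    omega
  · rw [j.2.1 k (by unfold depth at hj1 hk; omega), v.2.1 k (by unfold depth at hv1 hj1 hk; omega)]

end SandpileTree
namespace SandpileTree

variable {d h : ℕ}

/-- The subgroup generated by the classes of vertices in `F`. -/
def Kgrp (d h : ℕ) : AddSubgroup (SG d h) :=
  AddSubgroup.closure (xbar d h '' (Fset d h : Set (Vert d h)))

lemma mem_K_of_F {i : Vert d h} (hi : i ∈ Fset d h) : xbar d h i ∈ Kgrp d h :=
  AddSubgroup.subset_closure (Set.mem_image_of_mem _ (Finset.mem_coe.mpr hi))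

lemma rel (i : Vert d h) :
    (d : ℤ) • xbar d h i
      = (∑ j ∈ Finset.univ.filter (fun j => IsParent j i), xbar d h j)
      + ∑ j ∈ Finset.univ.filter (fun j => IsParent i j), xbar d h j := by
  have hmem : delta d h i ∈ lat d h := AddSubgroup.subset_closure (Set.mem_range_self i)
  have h0 : (QuotientAddGroup.mk' (lat d h)) (delta d h i) = 0 :=
    (QuotientAddGroup.eq_zero_iff _).mpr hmem
  unfold delta at h0
  rw [map_sub, map_sub, map_zsmul, map_sum, map_sum] at h0
  rw [sub_sub, sub_eq_zero] at h0
  exact h0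

lemma parents_filter_eq {i j : Vert d h} (hij : IsParent i j) :
    Finset.univ.filter (fun u => IsParent u j) = {i} := by
  ext u
  simp only [Finset.mem_filter, Finset.mem_univ, true_and, Finset.mem_singleton]
  constructor
  · intro hu
    obtain ⟨hv1, e1⟩ := isParent_unique hu
    obtain ⟨hv2, e2⟩ := isParent_unique hij
    rw [e1, e2]
  · rintro rfl
    exact hij

lemma parents_filter_root {j : Vert d h} (hj : depth j = 0) :
    Finset.univ.filter (fun u => IsParent u j) = ∅ := by
  ext u
  simp only [Finset.mem_filter, Finset.mem_univ, true_and, Finset.notMem_empty,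
    iff_false]
  intro hu
  exact absurd hu.1 (by omega)

lemma rel_nonroot {i j : Vert d h} (hij : IsParent i j) :
    (d : ℤ) • xbar d h j
      = xbar d h i + ∑ c ∈ Finset.univ.filter (fun c => IsParent j c), xbar d h c := by
  rw [rel j, parents_filter_eq hij, Finset.sum_singleton]

lemma rel_root {j : Vert d h} (hj : depth j = 0) :
    (d : ℤ) • xbar d h j = ∑ c ∈ Finset.univ.filter (fun c => IsParent j c), xbar d h c := by
  rw [rel j, parents_filter_root hj, Finset.sum_empty, zero_add]

lemma stage1 (hd : 3 ≤ d) (hh : 1 ≤ h) :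
    ∀ k, ∀ v : Vert d h, depth v % 2 ≠ h % 2 → h - depth v ≤ k → xbar d h v ∈ Kgrp d h := by
  intro k
  induction k with
  | zero =>
    intro v hp hk
    exact absurd rfl (by have := depth_le v; omega : depth v ≠ depth v)
  | succ k ih =>
    intro v hp hk
    have hvh : depth v < h := by
      rcases lt_or_eq_of_le (depth_le v) with h' | h'
      · exact h'
      · omega
    have hj := isParent_childOf v hvh 1 (by omega) (fun _ => by omega)
    set j := childOf v hvh 1 (by omega) (fun _ => by omega) with hjdef
    have hdj : depth j = depth v + 1 := depth_childOf v hvh 1 _ _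
    have hjF : j ∈ Fset d h := by
      rw [Fset, Finset.mem_filter]
      refine ⟨Finset.mem_univ _, by omega, Or.inr ?_⟩
      rw [hjdef, lastStep_childOf]
      omega
    have hrel := rel_nonroot hj
    have hv : xbar d h v = (d : ℤ) • xbar d h j
        - ∑ c ∈ Finset.univ.filter (fun c => IsParent j c), xbar d h c := by
      rw [hrel]; abel
    rw [hv]
    refine sub_mem (zsmul_mem (mem_K_of_F hjF) _) (sum_mem ?_)
    intro c hc
    rw [Finset.mem_filter] at hc
    have hdc : depth c = depth v + 2 := by have := hc.2.1; omega
    exact ih c (by omega) (by omega)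

lemma stage2 (hd : 3 ≤ d) (hh : 1 ≤ h) :
    ∀ t, ∀ v : Vert d h, depth v = t → depth v % 2 = h % 2 → xbar d h v ∈ Kgrp d h := by
  intro t
  induction t using Nat.strong_induction_on with
  | _ t ih =>
    intro v hvt hp
    by_cases h0 : depth v = 0
    · exact mem_K_of_F (by rw [Fset, Finset.mem_filter]; exact ⟨Finset.mem_univ _, hp, Or.inl h0⟩)
    · by_cases hls : lastStep v = 0
      · have hv0 : 0 < depth v := by omega
        have hpar := isParent_parentOf v hv0
        set u := parentOf v hv0 with hudef
        have hdu : depth u = depth v - 1 := depth_parentOf v hv0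
        have hu : xbar d h u ∈ Kgrp d h := stage1 hd hh (h + 1) u (by omega) (by omega)
        have hP : (∑ w ∈ Finset.univ.filter (fun w => IsParent w u), xbar d h w) ∈ Kgrp d h := by
          by_cases hu0 : depth u = 0
          · rw [parents_filter_root hu0, Finset.sum_empty]
            exact zero_mem _
          · have hpu := isParent_parentOf u (by omega)
            rw [parents_filter_eq hpu, Finset.sum_singleton]
            have hdpu : depth (parentOf u (by omega : 0 < depth u)) = depth u - 1 :=
              depth_parentOf u _
            exact ih (depth v - 2) (by omega) _ (by omega) (by omega)
        have hvC : v ∈ Finset.univ.filter (fun c => IsParent u c) :=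
          Finset.mem_filter.mpr ⟨Finset.mem_univ _, hpar⟩
        have hsum : ∑ c ∈ Finset.univ.filter (fun c => IsParent u c), xbar d h c
            = xbar d h v
              + ∑ c ∈ (Finset.univ.filter (fun c => IsParent u c)).erase v, xbar d h c :=
          (Finset.add_sum_erase _ _ hvC).symm
        have hrelu := rel u
        have hv : xbar d h v = (d : ℤ) • xbar d h u
            - (∑ w ∈ Finset.univ.filter (fun w => IsParent w u), xbar d h w)
            - ∑ c ∈ (Finset.univ.filter (fun c => IsParent u c)).erase v, xbar d h c := by
          rw [hrelu, hsum]; abel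
        rw [hv]
        refine sub_mem (sub_mem (zsmul_mem hu _) hP) (sum_mem ?_)
        intro c hc
        rw [Finset.mem_erase, Finset.mem_filter] at hc
        obtain ⟨hcv, -, hcpar⟩ := hc
        have hdc : depth c = depth v := by have := hcpar.1; omega
        have hlsc : lastStep c ≠ 0 := by
          intro hc0
          exact hcv (child_eq_of_lastStep hcpar hpar (by omega))
        refine mem_K_of_F ?_
        rw [Fset, Finset.mem_filter]
        exact ⟨Finset.mem_univ _, by omega, Or.inr hlsc⟩
      · refine mem_K_of_F ?_
        rw [Fset, Finset.mem_filter]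
        exact ⟨Finset.mem_univ _, hp, Or.inr hls⟩

lemma good (hd : 3 ≤ d) (hh : 1 ≤ h) (v : Vert d h) : xbar d h v ∈ Kgrp d h := by
  by_cases hp : depth v % 2 = h % 2
  · exact stage2 hd hh (depth v) v rfl hp
  · exact stage1 hd hh (h + 1) v hp (by omega)

lemma Ktop (hd : 3 ≤ d) (hh : 1 ≤ h) :
    AddSubgroup.closure (xbar d h '' (Fset d h : Set (Vert d h))) = ⊤ := by
  rw [eq_top_iff]
  intro x _
  obtain ⟨g, rfl⟩ := QuotientAddGroup.mk'_surjective (lat d h) x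
  have hg : g = ∑ v : Vert d h, Pi.single v (g v) := (Finset.univ_sum_single g).symm
  have hsingle : ∀ v : Vert d h, (Pi.single v (g v) : Vert d h → ℤ) = g v • Pi.single v 1 := by
    intro v
    funext j
    by_cases hj : j = v
    · subst hj; simp
    · simp [Pi.single_apply, hj]
  rw [hg]
  rw [map_sum]
  refine sum_mem ?_
  intro v _
  rw [hsingle v, map_zsmul]
  exact zsmul_mem (good hd hh v) _

end SandpileTree
namespace SandpileTree

variable {d h : ℕ}

open Finset

lemma fin_filter_card (d : ℕ) (p : ℕ → Prop) [DecidablePred p] :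
    (Finset.univ.filter (fun x : Fin d => p (x : ℕ))).card = ((range d).filter p).card := by
  refine Finset.card_bij' (fun a _ => (a : ℕ)) (fun b hb => ⟨b, (mem_range.mp (mem_filter.mp hb).1)⟩)
    ?_ ?_ ?_ ?_
  · intro a ha
    rw [mem_filter] at ha ⊢
    exact ⟨mem_range.mpr a.isLt, ha.2⟩
  · intro b hb
    rw [mem_filter] at hb ⊢
    exact ⟨mem_univ _, hb.2⟩
  · intro a _; rfl
  · intro b _; rfl

/-- The finset of allowed values for the `i`-th coordinate of a vertex at depth `n`
belonging to `F`. -/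
def S (d n i : ℕ) : Finset (Fin d) :=
  Finset.univ.filter (fun x : Fin d =>
    (n ≤ i → (x : ℕ) = 0) ∧ (0 < i → i < n → (x : ℕ) < d - 1) ∧ (i = n - 1 → (x : ℕ) ≠ 0))

lemma card_S (hd : 3 ≤ d) (n i : ℕ) (hn : 1 ≤ n) :
    (S d n i).card = if n ≤ i then 1 else if i = 0 then (if n = 1 then d - 1 else d)
      else if i = n - 1 then d - 2 else d - 1 := by
  have hfc := fin_filter_card d
    (fun y => (n ≤ i → y = 0) ∧ (0 < i → i < n → y < d - 1) ∧ (i = n - 1 → y ≠ 0))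
  rw [S, hfc]
  by_cases h1 : n ≤ i
  · rw [if_pos h1]
    have : (range d).filter (fun x => (n ≤ i → x = 0) ∧ (0 < i → i < n → x < d - 1)
        ∧ (i = n - 1 → x ≠ 0)) = {0} := by
      ext x
      simp only [mem_filter, mem_range, mem_singleton, true_implies]
      omega
    rw [this, card_singleton]
  · rw [if_neg h1]
    by_cases h2 : i = 0
    · subst h2
      rw [if_pos rfl]
      by_cases h3 : n = 1
      · subst h3
        rw [if_pos rfl]
        have : (range d).filter (fun x => (1 ≤ 0 → x = 0) ∧ (0 < 0 → 0 < 1 → x < d - 1)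
            ∧ (0 = 1 - 1 → x ≠ 0)) = (range d).erase 0 := by
          ext x
          simp only [mem_filter, mem_range, mem_erase, true_implies]
          omega
        have h0 : (0 : ℕ) ∈ range d := mem_range.mpr (by omega)
        rw [this, card_erase_of_mem h0, card_range]
      · rw [if_neg h3]
        have : (range d).filter (fun x => (n ≤ 0 → x = 0) ∧ (0 < 0 → 0 < n → x < d - 1)
            ∧ (0 = n - 1 → x ≠ 0)) = range d := by
          ext x
          simp only [mem_filter, mem_range, true_implies]
          omega
        rw [this, card_range]
    · rw [if_neg h2]
      by_cases h4 : i = n - 1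
      · rw [if_pos h4]
        have : (range d).filter (fun x => (n ≤ i → x = 0) ∧ (0 < i → i < n → x < d - 1)
            ∧ (i = n - 1 → x ≠ 0)) = (range (d - 1)).erase 0 := by
          ext x
          simp only [mem_filter, mem_range, mem_erase, true_implies]
          omega
        have h0 : (0 : ℕ) ∈ range (d - 1) := mem_range.mpr (by omega)
        rw [this, card_erase_of_mem h0, card_range]
        omega
      · rw [if_neg h4]
        have : (range d).filter (fun x => (n ≤ i → x = 0) ∧ (0 < i → i < n → x < d - 1)
            ∧ (i = n - 1 → x ≠ 0)) = range (d - 1) := by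
          ext x
          simp only [mem_filter, mem_range, true_implies]
          omega
        rw [this, card_range]

end SandpileTree
namespace SandpileTree

variable {d h : ℕ}

open Finset

lemma fiber_card (hd : 3 ≤ d) (n : ℕ) (hn1 : 1 ≤ n) (hnh : n ≤ h) (hpar : n % 2 = h % 2) :
    ((Fset d h).filter (fun v => depth v = n)).card = ∏ i ∈ range h, (S d n i).card := by
  have hpf : ∏ i ∈ range h, (S d n i).card
      = (Fintype.piFinset (fun i : Fin h => S d n (i : ℕ))).card := by
    rw [Fintype.card_piFinset, ← Fin.prod_univ_eq_prod_range (fun i => (S d n i).card) h]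
  rw [hpf]
  refine Finset.card_bij' (fun v _ => v.1.2)
    (fun f hf => ⟨(⟨n, by omega⟩, f), ?_, ?_⟩) ?_ ?_ ?_ ?_
  · intro i hi
    simp only [Fin.val_mk] at hi
    have := (Fintype.mem_piFinset).mp hf i; rw [S, Finset.mem_filter] at this
    exact this.2.1 hi
  · intro i hi1 hi2
    simp only [Fin.val_mk] at hi2
    have := (Fintype.mem_piFinset).mp hf i; rw [S, Finset.mem_filter] at this
    exact this.2.2.1 hi1 hi2
  · intro v hv
    rw [Finset.mem_filter] at hv
    obtain ⟨hvF, hvd⟩ := hv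
    rw [Fset, Finset.mem_filter] at hvF
    obtain ⟨-, hvp, hvl⟩ := hvF
    have hls : lastStep v ≠ 0 := by
      rcases hvl with h' | h'
      · omega
      · exact h'
    rw [Fintype.mem_piFinset]
    intro i
    rw [S, Finset.mem_filter]
    refine ⟨Finset.mem_univ _, fun hni => v.2.1 i (by unfold depth at hvd; omega),
      fun hi1 hi2 => v.2.2 i hi1 (by unfold depth at hvd; omega), fun hin => ?_⟩
    have he : (⟨depth v - 1, by have := depth_le v; omega⟩ : Fin h) = i :=
      Fin.ext (by simp only [Fin.val_mk]; omega)
    rw [lastStep_eq v (by omega), he] at hls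
    exact hls
  · intro f hf
    refine Finset.mem_filter.mpr ?_
    constructor
    · refine Finset.mem_filter.mpr ?_
      refine ⟨Finset.mem_univ _, ?_, Or.inr ?_⟩
      · show (n : ℕ) % 2 = h % 2
        exact hpar
      · have hd0 : (0 : ℕ) < n := hn1
        refine (lastStep_eq _ (by show 0 < (n : ℕ); omega)).trans_ne ?_
        have := (Finset.mem_filter.mp
          ((Fintype.mem_piFinset).mp hf ⟨n - 1, by omega⟩)).2
        exact this.2.2 (by simp only [Fin.val_mk])
    · show (n : ℕ) = n
      rfl
  · intro v hv
    rw [Finset.mem_filter] at hv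
    apply vert_ext
    · exact hv.2.symm
    · intro k; rfl
  · intro f hf
    rfl

lemma fiber_empty (n : ℕ) (hpar : n % 2 ≠ h % 2) :
    ((Fset d h).filter (fun v => depth v = n)).card = 0 := by
  rw [Finset.card_eq_zero]
  ext v
  simp only [Finset.mem_filter, Finset.notMem_empty, iff_false, not_and]
  intro hvF hvd
  rw [Fset, Finset.mem_filter] at hvF
  omega

lemma fiber_zero (hd : 3 ≤ d) (hpar : h % 2 = 0) :
    ((Fset d h).filter (fun v => depth v = 0)).card = 1 := by
  rw [Finset.card_eq_one]
  refine ⟨root d h (by omega), ?_⟩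
  ext v
  simp only [Finset.mem_filter, Finset.mem_singleton]
  constructor
  · rintro ⟨-, hvd⟩
    refine vert_ext (by rw [hvd]; rfl) (fun k => ?_)
    rw [v.2.1 k (by unfold depth at hvd; omega)]
    rfl
  · rintro rfl
    refine ⟨?_, rfl⟩
    rw [Fset, Finset.mem_filter]
    exact ⟨Finset.mem_univ _, by rw [hpar]; rfl, Or.inl rfl⟩

end SandpileTree

namespace SandpileTree

variable {d h : ℕ}

open Finset

lemma prod_inner (hd : 3 ≤ d) (n : ℕ) :
    ∀ m, m + 1 ≤ n - 1 → ∏ i ∈ range (m + 1), (S d n i).card = d * (d - 1) ^ m := by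
  intro m
  induction m with
  | zero =>
    intro hm
    rw [Finset.prod_range_one, card_S hd n 0 (by omega), if_neg (by omega), if_pos rfl,
      if_neg (by omega)]
    simp
  | succ m ih =>
    intro hm
    rw [Finset.prod_range_succ, ih (by omega), card_S hd n (m + 1) (by omega),
      if_neg (by omega), if_neg (by omega), if_neg (by omega), pow_succ]
    ring

lemma prod_formula (hd : 3 ≤ d) (n : ℕ) (hn1 : 1 ≤ n) (hnh : n ≤ h) :
    ∏ i ∈ range h, (S d n i).card
      = if n = 1 then d - 1 else d * (d - 2) * (d - 1) ^ (n - 2) := by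
  have hsub : ∏ i ∈ range n, (S d n i).card = ∏ i ∈ range h, (S d n i).card := by
    refine Finset.prod_subset (Finset.range_subset_range.mpr (by omega)) ?_
    intro x hx hnx
    rw [mem_range] at hx hnx
    rw [card_S hd n x hn1, if_pos (by omega)]
  rw [← hsub]
  by_cases h1 : n = 1
  · subst h1
    rw [if_pos rfl, Finset.prod_range_one, card_S hd 1 0 (by omega), if_neg (by omega),
      if_pos rfl, if_pos rfl]
  · rw [if_neg h1]
    obtain ⟨m, rfl⟩ : ∃ m, n = m + 2 := ⟨n - 2, by omega⟩
    rw [Finset.prod_range_succ, prod_inner hd (m + 2) m (by omega),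
      card_S hd (m + 2) (m + 1) (by omega), if_neg (by omega), if_neg (by omega),
      if_pos (by omega)]
    simp only [Nat.add_sub_cancel]
    ring

lemma sum_formula (hd : 3 ≤ d) :
    ∀ h : ℕ, 1 ≤ h →
      (∑ n ∈ range (h + 1), (if n % 2 = h % 2 then
        (if n = 0 then 1 else if n = 1 then d - 1 else d * (d - 2) * (d - 1) ^ (n - 2))
        else 0)) = (d - 1) ^ h := by
  intro h
  induction h using Nat.strong_induction_on with
  | _ h ih =>
    intro hh1
    obtain ⟨m, rfl⟩ : ∃ m, d = m + 3 := ⟨d - 3, by omega⟩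
    rcases Nat.lt_or_ge h 3 with h3 | h3
    · interval_cases h
      · simp [Finset.sum_range_succ]
      · rw [show (2 : ℕ) + 1 = 3 from rfl]
        rw [Finset.sum_range_succ, Finset.sum_range_succ, Finset.sum_range_one]
        norm_num
        simp only [show m + 3 - 1 = m + 2 from rfl, show m + 3 - 2 = m + 1 from rfl]
        ring
    · obtain ⟨k, rfl⟩ : ∃ k, h = k + 3 := ⟨h - 3, by omega⟩
      rw [Finset.sum_range_succ, Finset.sum_range_succ]
      have hcong : ∀ n ∈ range (k + 2),
          (if n % 2 = (k + 3) % 2 then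
            (if n = 0 then 1 else if n = 1 then m + 3 - 1
              else (m + 3) * (m + 3 - 2) * (m + 3 - 1) ^ (n - 2)) else 0)
          = (if n % 2 = (k + 1) % 2 then
            (if n = 0 then 1 else if n = 1 then m + 3 - 1
              else (m + 3) * (m + 3 - 2) * (m + 3 - 1) ^ (n - 2)) else 0) := by
        intro n _
        by_cases hp : n % 2 = (k + 1) % 2
        · rw [if_pos (by omega), if_pos hp]
        · rw [if_neg (by omega), if_neg hp]
      rw [Finset.sum_congr rfl hcong, ih (k + 1) (by omega) (by omega)]
      rw [if_neg (by omega), if_pos (by omega), if_neg (by omega), if_neg (by omega)]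
      have e2 : m + 3 - 1 = m + 2 := rfl
      have e3 : m + 3 - 2 = m + 1 := rfl
      rw [e2, e3]
      have e4 : k + 3 - 2 = k + 1 := rfl
      rw [e4, add_zero]
      have e5 : (m + 2 : ℕ) ^ (k + 3) = (m + 2) ^ (k + 1) * (m + 2) ^ 2 := by
        rw [← pow_add]
      rw [e5]
      ring

lemma card_Fset (hd : 3 ≤ d) (hh : 1 ≤ h) : (Fset d h).card = (d - 1) ^ h := by
  have hfib : (Fset d h).card
      = ∑ n ∈ range (h + 1), ((Fset d h).filter (fun v => depth v = n)).card :=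
    Finset.card_eq_sum_card_fiberwise (fun v _ => mem_range.mpr (by have := depth_le v; omega))
  rw [hfib, ← sum_formula hd h hh]
  refine Finset.sum_congr rfl ?_
  intro n hn
  rw [mem_range] at hn
  by_cases hp : n % 2 = h % 2
  · rw [if_pos hp]
    by_cases h0 : n = 0
    · subst h0
      rw [if_pos rfl]
      exact fiber_zero hd (by omega)
    · rw [if_neg h0, fiber_card hd n (by omega) (by omega) hp,
        prod_formula hd n (by omega) (by omega)]
  · rw [if_neg hp, fiber_empty n hp]

end SandpileTree

/-- The sandpile group `G(d,h)` of the `d`-regular tree of depth `h` is generated by the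
`(d−1)^h` elements `{x̄ᵢ : i ∈ F(d,h)}`; hence `rank(G(d,h)) ≤ (d−1)^h`. -/
theorem generated_by_F (d h : ℕ) (hd : 3 ≤ d) (hh : 1 ≤ h) :
    (Fset d h).card = (d - 1) ^ h ∧
    AddSubgroup.closure (xbar d h '' (Fset d h : Set (Vert d h))) = ⊤ :=
  ⟨SandpileTree.card_Fset hd hh, SandpileTree.Ktop hd hh⟩
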